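/- The infinite dihedral group D_∞ = ⟨a, b⟩ acting on Z (a: n↦n+1, b: n↦−n) has exactly three subgroups (up to equality, i.e., exactly these three) that act transitively on Z and are of finite index: D_∞ itself, ⟨a⟩ ≅ Z, and ⟨a², ba⟩ (another infinite dihedral subgroup of index 2). -/

import Mathlib

/-- Translation `n ↦ n + 1` on `ℤ`, as a permutation. -/
def dihTrans : Equiv.Perm ℤ := Equiv.addLeft 1

/-- Negation `n ↦ -n` on `ℤ`, as a permutation. -/
def dihNeg : Equiv.Perm ℤ := Equiv.neg ℤ

/-- The infinite dihedral group `D∞ = ⟨a, b⟩` acting on `ℤ`. -/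
def dihGroup : Subgroup (Equiv.Perm ℤ) := Subgroup.closure {dihTrans, dihNeg}

lemma dihTrans_zpow_apply (k n : ℤ) : (dihTrans ^ k) n = k + n := by
  induction k using Int.induction_on generalizing n with
  | zero => simp
  | succ i ih => rw [zpow_add_one, Equiv.Perm.mul_apply, ih]; simp [dihTrans]; ring
  | pred i ih => rw [zpow_sub_one, Equiv.Perm.mul_apply, ih]; simp [dihTrans]; ring

lemma dihRefl_apply (k n : ℤ) : (dihTrans ^ k * dihNeg) n = k - n := by
  simp [dihNeg, Equiv.Perm.mul_apply, dihTrans_zpow_apply]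
  ring

lemma t_inj {j k : ℤ} (h : dihTrans ^ j = dihTrans ^ k) : j = k := by
  have := congrArg (fun e : Equiv.Perm ℤ => e 0) h
  simpa [dihTrans_zpow_apply] using this

lemma t_ne_r (j k : ℤ) : dihTrans ^ j ≠ dihTrans ^ k * dihNeg := by
  intro h
  have h0 := congrArg (fun e : Equiv.Perm ℤ => e 0) h
  have h1 := congrArg (fun e : Equiv.Perm ℤ => e 1) h
  simp [dihTrans_zpow_apply, dihRefl_apply] at h0 h1
  omega

lemma r_inj {j k : ℤ} (h : dihTrans ^ j * dihNeg = dihTrans ^ k * dihNeg) : j = k :=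
  t_inj (mul_right_cancel h)

lemma dihNeg_apply (n : ℤ) : dihNeg n = -n := rfl

lemma neg_mul_zpow (k : ℤ) : dihNeg * dihTrans ^ k = dihTrans ^ (-k) * dihNeg := by
  ext n
  simp only [Equiv.Perm.mul_apply, dihTrans_zpow_apply, dihNeg_apply]
  ring

lemma tt_mul (j k : ℤ) : dihTrans ^ j * dihTrans ^ k = dihTrans ^ (j + k) :=
  (zpow_add _ _ _).symm

lemma tr_mul (j k : ℤ) :
    dihTrans ^ j * (dihTrans ^ k * dihNeg) = dihTrans ^ (j + k) * dihNeg := by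
  rw [← mul_assoc, tt_mul]

lemma rt_mul (j k : ℤ) :
    (dihTrans ^ j * dihNeg) * dihTrans ^ k = dihTrans ^ (j - k) * dihNeg := by
  rw [mul_assoc, neg_mul_zpow, ← mul_assoc, tt_mul, sub_eq_add_neg]

lemma rr_mul (j k : ℤ) :
    (dihTrans ^ j * dihNeg) * (dihTrans ^ k * dihNeg) = dihTrans ^ (j - k) := by
  have : (dihTrans ^ j * dihNeg) * (dihTrans ^ k * dihNeg)
      = (dihTrans ^ j * dihNeg * dihTrans ^ k) * dihNeg := by group
  rw [this, rt_mul, mul_assoc]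
  have hb : dihNeg * dihNeg = 1 := by ext n; simp [dihNeg]
  rw [hb, mul_one]

lemma r_inv (j : ℤ) : (dihTrans ^ j * dihNeg)⁻¹ = dihTrans ^ j * dihNeg := by
  have := rr_mul j j
  simp only [sub_self, zpow_zero] at this
  exact inv_eq_of_mul_eq_one_right this

lemma t_mul_t1 (k : ℤ) : dihTrans ^ k * dihTrans = dihTrans ^ (k + 1) :=
  (zpow_add_one dihTrans k).symm

lemma r_mul_t1 (k : ℤ) :
    (dihTrans ^ k * dihNeg) * dihTrans = dihTrans ^ (k - 1) * dihNeg := by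
  have h := rt_mul k 1
  rwa [zpow_one] at h

lemma hT : dihTrans ∈ dihGroup := Subgroup.subset_closure (by simp)
lemma hN : dihNeg ∈ dihGroup := Subgroup.subset_closure (by simp)

lemma mem_dihGroup_iff {g : Equiv.Perm ℤ} :
    g ∈ dihGroup ↔ ∃ k : ℤ, g = dihTrans ^ k ∨ g = dihTrans ^ k * dihNeg := by
  constructor
  · intro hg
    induction hg using Subgroup.closure_induction with
    | mem x hx =>
      simp only [Set.mem_insert_iff, Set.mem_singleton_iff] at hx
      rcases hx with rfl | rfl
      · exact ⟨1, Or.inl (by simp)⟩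
      · exact ⟨0, Or.inr (by simp)⟩
    | one => exact ⟨0, Or.inl (by simp)⟩
    | mul x y hx hy ihx ihy =>
      obtain ⟨j, hj | hj⟩ := ihx <;> obtain ⟨k, hk | hk⟩ := ihy <;> subst hj hk
      · exact ⟨j + k, Or.inl (tt_mul j k)⟩
      · exact ⟨j + k, Or.inr (tr_mul j k)⟩
      · exact ⟨j - k, Or.inr (rt_mul j k)⟩
      · exact ⟨j - k, Or.inl (rr_mul j k)⟩
    | inv x hx ihx =>
      obtain ⟨j, hj | hj⟩ := ihx <;> subst hj
      · exact ⟨-j, Or.inl (by rw [← zpow_neg])⟩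
      · exact ⟨j, Or.inr (r_inv j)⟩
  · rintro ⟨k, h | h⟩ <;> subst h
    · exact zpow_mem hT k
    · exact mul_mem (zpow_mem hT k) hN

lemma mem_H3_iff {g : Equiv.Perm ℤ} :
    g ∈ Subgroup.closure {dihTrans ^ 2, dihTrans * dihNeg} ↔
      ∃ k : ℤ, g = dihTrans ^ (2 * k) ∨ g = dihTrans ^ (2 * k + 1) * dihNeg := by
  constructor
  · intro hg
    induction hg using Subgroup.closure_induction with
    | mem x hx =>
      simp only [Set.mem_insert_iff, Set.mem_singleton_iff] at hx
      rcases hx with rfl | rfl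
      · exact ⟨1, Or.inl (by rw [← zpow_natCast dihTrans 2]; norm_num)⟩
      · exact ⟨0, Or.inr (by simp)⟩
    | one => exact ⟨0, Or.inl (by simp)⟩
    | mul x y hx hy ihx ihy =>
      obtain ⟨j, hj | hj⟩ := ihx <;> obtain ⟨k, hk | hk⟩ := ihy <;> subst hj hk
      · exact ⟨j + k, Or.inl (by rw [tt_mul]; congr 1; ring)⟩
      · exact ⟨j + k, Or.inr (by rw [tr_mul]; congr 2; ring)⟩
      · exact ⟨j - k, Or.inr (by rw [rt_mul]; congr 2; ring)⟩
      · exact ⟨j - k, Or.inl (by rw [rr_mul]; congr 1; ring)⟩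
    | inv x hx ihx =>
      obtain ⟨j, hj | hj⟩ := ihx <;> subst hj
      · exact ⟨-j, Or.inl (by rw [← zpow_neg]; congr 1; ring)⟩
      · exact ⟨j, Or.inr (r_inv _)⟩
  · rintro ⟨k, h | h⟩ <;> subst h
    · have : dihTrans ^ (2 * k) = (dihTrans ^ 2) ^ k := by
        rw [← zpow_natCast dihTrans 2, ← zpow_mul]; norm_num
      rw [this]
      exact zpow_mem (Subgroup.subset_closure (by simp)) k
    · have : dihTrans ^ (2 * k + 1) * dihNeg = dihTrans ^ (2 * k) * (dihTrans * dihNeg) := by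
        rw [← mul_assoc, zpow_add_one]
      rw [this]
      have h1 : dihTrans ^ (2 * k) ∈ Subgroup.closure {dihTrans ^ 2, dihTrans * dihNeg} := by
        have : dihTrans ^ (2 * k) = (dihTrans ^ 2) ^ k := by
          rw [← zpow_natCast dihTrans 2, ← zpow_mul]; norm_num
        rw [this]
        exact zpow_mem (Subgroup.subset_closure (by simp)) k
      exact mul_mem h1 (Subgroup.subset_closure (by simp))

lemma r_not_mem_H2 (k : ℤ) : dihTrans ^ k * dihNeg ∉ Subgroup.closure {dihTrans} := by
  intro h
  rw [Subgroup.mem_closure_singleton] at h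
  obtain ⟨n, hn⟩ := h
  exact t_ne_r n k hn

lemma t_mem_H2 (k : ℤ) : dihTrans ^ k ∈ Subgroup.closure {dihTrans} :=
  Subgroup.mem_closure_singleton.mpr ⟨k, rfl⟩

lemma t_odd_not_mem_H3 (m : ℤ) :
    dihTrans ^ (2 * m + 1) ∉ Subgroup.closure {dihTrans ^ 2, dihTrans * dihNeg} := by
  intro h
  rw [mem_H3_iff] at h
  obtain ⟨j, hj | hj⟩ := h
  · have := t_inj hj; omega
  · exact t_ne_r _ _ hj

lemma r_even_not_mem_H3 (m : ℤ) :
    dihTrans ^ (2 * m) * dihNeg ∉ Subgroup.closure {dihTrans ^ 2, dihTrans * dihNeg} := by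
  intro h
  rw [mem_H3_iff] at h
  obtain ⟨j, hj | hj⟩ := h
  · exact t_ne_r _ _ hj.symm
  · have := r_inj hj; omega

lemma relindex_H2 : (Subgroup.closure {dihTrans}).relIndex dihGroup = 2 := by
  rw [Subgroup.relIndex, Subgroup.index_eq_two_iff]
  refine ⟨⟨dihNeg, hN⟩, ?_⟩
  rintro ⟨g, hg⟩
  obtain ⟨k, h | h⟩ := mem_dihGroup_iff.mp hg <;> subst h
  · refine Or.inr ⟨Subgroup.mem_subgroupOf.mpr (t_mem_H2 k), ?_⟩
    intro hc
    exact r_not_mem_H2 k (Subgroup.mem_subgroupOf.mp hc)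
  · refine Or.inl ⟨?_, ?_⟩
    · have : (dihTrans ^ k * dihNeg) * dihNeg = dihTrans ^ k := by
        rw [mul_assoc]
        have hb : dihNeg * dihNeg = 1 := by ext n; simp [dihNeg]
        rw [hb, mul_one]
      refine Subgroup.mem_subgroupOf.mpr ?_
      show ((dihTrans ^ k * dihNeg) * dihNeg) ∈ _
      rw [this]
      exact t_mem_H2 k
    · intro hc
      exact r_not_mem_H2 k (Subgroup.mem_subgroupOf.mp hc)

lemma relindex_H3 :
    (Subgroup.closure {dihTrans ^ 2, dihTrans * dihNeg}).relIndex dihGroup = 2 := by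
  rw [Subgroup.relIndex, Subgroup.index_eq_two_iff]
  refine ⟨⟨dihTrans, hT⟩, ?_⟩
  rintro ⟨g, hg⟩
  obtain ⟨k, h | h⟩ := mem_dihGroup_iff.mp hg <;> subst h
  · rcases Int.even_or_odd k with ⟨m, hm⟩ | ⟨m, hm⟩
    · refine Or.inr ⟨Subgroup.mem_subgroupOf.mpr (mem_H3_iff.mpr ⟨m, Or.inl (by rw [show (2 * m : ℤ) = k by omega])⟩), ?_⟩
      intro hc
      have : (dihTrans ^ k * dihTrans) ∈ Subgroup.closure {dihTrans ^ 2, dihTrans * dihNeg} :=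
        Subgroup.mem_subgroupOf.mp hc
      rw [t_mul_t1] at this
      exact t_odd_not_mem_H3 m (by rw [show 2 * m + 1 = k + 1 by omega]; exact this)
    · refine Or.inl ⟨?_, ?_⟩
      · refine Subgroup.mem_subgroupOf.mpr ?_
        show (dihTrans ^ k * dihTrans) ∈ _
        rw [t_mul_t1]
        exact mem_H3_iff.mpr ⟨m + 1, Or.inl (by rw [show (2 * (m + 1) : ℤ) = k + 1 by omega])⟩
      · intro hc
        exact t_odd_not_mem_H3 m
          (by rw [show 2 * m + 1 = k by omega]; exact Subgroup.mem_subgroupOf.mp hc)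
  · rcases Int.even_or_odd k with ⟨m, hm⟩ | ⟨m, hm⟩
    · refine Or.inl ⟨?_, ?_⟩
      · refine Subgroup.mem_subgroupOf.mpr ?_
        show ((dihTrans ^ k * dihNeg) * dihTrans) ∈ _
        rw [r_mul_t1]
        exact mem_H3_iff.mpr ⟨m - 1, Or.inr (by rw [show (2 * (m - 1) + 1 : ℤ) = k - 1 by omega])⟩
      · intro hc
        exact r_even_not_mem_H3 m
          (by rw [show 2 * m = k by omega]; exact Subgroup.mem_subgroupOf.mp hc)
    · refine Or.inr ⟨Subgroup.mem_subgroupOf.mpr (mem_H3_iff.mpr ⟨m, Or.inr (by rw [show (2 * m + 1 : ℤ) = k by omega])⟩), ?_⟩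
      intro hc
      have : ((dihTrans ^ k * dihNeg) * dihTrans) ∈ Subgroup.closure {dihTrans ^ 2, dihTrans * dihNeg} :=
        Subgroup.mem_subgroupOf.mp hc
      rw [r_mul_t1] at this
      exact r_even_not_mem_H3 m (by rw [show 2 * m = k - 1 by omega]; exact this)

/-- The infinite dihedral group `D∞ = ⟨a, b⟩` acting on `ℤ` has
exactly three finite-index subgroups acting transitively on `ℤ`:
`D∞` itself, `⟨a⟩ ≅ ℤ`, and `⟨a², ba⟩` (translation by 2 and reflection `n ↦ 1 - n`). -/
theorem stmt15 :
    {H : Subgroup (Equiv.Perm ℤ) |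
        H ≤ dihGroup ∧ H.relIndex dihGroup ≠ 0 ∧
        ∀ n : ℤ, n ∈ MulAction.orbit H (0 : ℤ)} =
      {dihGroup, Subgroup.closure {dihTrans},
        Subgroup.closure {dihTrans ^ 2, dihTrans * dihNeg}} := by
  ext H
  simp only [Set.mem_setOf_eq, Set.mem_insert_iff, Set.mem_singleton_iff]
  constructor
  · rintro ⟨hle, _, htrans⟩
    -- transitivity gives: for every n, t^n ∈ H or t^n * b ∈ H
    have key : ∀ n : ℤ, dihTrans ^ n ∈ H ∨ dihTrans ^ n * dihNeg ∈ H := by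
      intro n
      obtain ⟨⟨h, hH⟩, hh⟩ := MulAction.mem_orbit_iff.mp (htrans n)
      simp only [Subgroup.mk_smul, Equiv.Perm.smul_def] at hh
      obtain ⟨k, hk | hk⟩ := mem_dihGroup_iff.mp (hle hH) <;> subst hk
      · rw [dihTrans_zpow_apply] at hh
        left; rw [show n = k by omega]; exact hH
      · rw [dihRefl_apply] at hh
        right; rw [show n = k by omega]; exact hH
    by_cases hA : dihTrans ∈ H
    · by_cases hR : ∃ c : ℤ, dihTrans ^ c * dihNeg ∈ H
      · -- H = dihGroup
        left
        refine le_antisymm hle ?_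
        rw [dihGroup, Subgroup.closure_le]
        rintro x hx
        simp only [Set.mem_insert_iff, Set.mem_singleton_iff] at hx
        rcases hx with rfl | rfl
        · exact hA
        · obtain ⟨c, hc⟩ := hR
          have h1 : dihTrans ^ (-c) ∈ H := zpow_mem hA (-c)
          have h2 := mul_mem h1 hc
          rw [tr_mul] at h2
          simpa using h2
      · -- H = closure {dihTrans}
        right; left
        refine le_antisymm ?_ ?_
        · intro g hg
          obtain ⟨k, hk | hk⟩ := mem_dihGroup_iff.mp (hle hg) <;> subst hk
          · exact t_mem_H2 k
          · exact absurd hg (fun h => hR ⟨k, h⟩)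
        · rw [Subgroup.closure_le]
          intro x hx
          rw [Set.mem_singleton_iff] at hx
          subst hx
          exact hA
    · -- H = H3
      right; right
      have hr1 : dihTrans ^ (1 : ℤ) * dihNeg ∈ H := by
        rcases key 1 with h | h
        · rw [zpow_one] at h; exact absurd h hA
        · exact h
      have ht2 : dihTrans ^ (2 : ℤ) ∈ H := by
        rcases key 2 with h | h
        · exact h
        · have := mul_mem h hr1
          rw [rr_mul] at this
          norm_num at this
          exact absurd this hA
      -- no odd translations
      have hodd : ∀ m : ℤ, dihTrans ^ (2 * m + 1) ∉ H := by
        intro m hm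
        have h1 : (dihTrans ^ (2 : ℤ)) ^ (-m) ∈ H := zpow_mem ht2 (-m)
        rw [← zpow_mul] at h1
        have := mul_mem hm h1
        rw [tt_mul] at this
        rw [show 2 * m + 1 + 2 * -m = 1 by ring, zpow_one] at this
        exact absurd this hA
      refine le_antisymm ?_ ?_
      · intro g hg
        obtain ⟨k, hk | hk⟩ := mem_dihGroup_iff.mp (hle hg) <;> subst hk
        · rcases Int.even_or_odd k with ⟨m, hm⟩ | ⟨m, hm⟩
          · exact mem_H3_iff.mpr ⟨m, Or.inl (by rw [show (2 * m : ℤ) = k by omega])⟩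
          · exact absurd (by rw [show 2 * m + 1 = k by omega]; exact hg) (hodd m)
        · rcases Int.even_or_odd k with ⟨m, hm⟩ | ⟨m, hm⟩
          · -- r even in H gives odd translation
            have := mul_mem hg hr1
            rw [rr_mul] at this
            exact absurd (by rw [show 2 * (m - 1) + 1 = k - 1 by omega]; exact this) (hodd (m - 1))
          · exact mem_H3_iff.mpr ⟨m, Or.inr (by rw [show (2 * m + 1 : ℤ) = k by omega])⟩
      · rw [Subgroup.closure_le]
        rintro x hx
        simp only [Set.mem_insert_iff, Set.mem_singleton_iff] at hx
        rcases hx with rfl | rfl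
        · rw [show (dihTrans ^ (2 : ℕ)) = dihTrans ^ (2 : ℤ) by rw [zpow_ofNat]]
          exact ht2
        · rw [show dihTrans * dihNeg = dihTrans ^ (1 : ℤ) * dihNeg by rw [zpow_one]]
          exact hr1
  · rintro (h | h | h) <;> subst h
    · refine ⟨le_refl _, by rw [Subgroup.relIndex_self]; omega, ?_⟩
      intro n
      refine MulAction.mem_orbit_iff.mpr ⟨⟨dihTrans ^ n, zpow_mem hT n⟩, ?_⟩
      simp [Equiv.Perm.smul_def, dihTrans_zpow_apply]
    · refine ⟨?_, by rw [relindex_H2]; omega, ?_⟩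
      · rw [Subgroup.closure_le]
        intro x hx
        rw [Set.mem_singleton_iff] at hx
        subst hx
        exact hT
      · intro n
        refine MulAction.mem_orbit_iff.mpr ⟨⟨dihTrans ^ n, t_mem_H2 n⟩, ?_⟩
        simp [Equiv.Perm.smul_def, dihTrans_zpow_apply]
    · refine ⟨?_, by rw [relindex_H3]; omega, ?_⟩
      · rw [Subgroup.closure_le]
        rintro x hx
        simp only [Set.mem_insert_iff, Set.mem_singleton_iff] at hx
        rcases hx with rfl | rfl
        · exact pow_mem hT 2
        · exact mul_mem hT hN
      · intro n
        rcases Int.even_or_odd n with ⟨m, hm⟩ | ⟨m, hm⟩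
        · refine MulAction.mem_orbit_iff.mpr
            ⟨⟨dihTrans ^ n, mem_H3_iff.mpr ⟨m, Or.inl (by rw [show (2 * m : ℤ) = n by omega])⟩⟩, ?_⟩
          simp [Equiv.Perm.smul_def, dihTrans_zpow_apply]
        · refine MulAction.mem_orbit_iff.mpr
            ⟨⟨dihTrans ^ n * dihNeg, mem_H3_iff.mpr ⟨m, Or.inr (by rw [show (2 * m + 1 : ℤ) = n by omega])⟩⟩, ?_⟩
          simp [Equiv.Perm.smul_def, dihRefl_apply]
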